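/- For all positive integers N and d, the VC dimension of the class D((G_d)_N), where (G_d)_N is the class of N-component d-dimensional Gaussian mixture densities, is at least N(d² + 3d)/2. -/

import Mathlib

open Matrix

/-- A class `C` of subsets of `α` shatters a set `X` if every subset of `X`
is cut out of `X` by some member of `C`. -/
def Shatters {α : Type*} (C : Set (Set α)) (X : Set α) : Prop :=
  ∀ Y ⊆ X, ∃ B ∈ C, Y = X ∩ B

/-- The VC dimension of a class `C` of subsets: the supremum (in `ℕ∞`) of the
cardinalities of finite sets shattered by `C`. -/
noncomputable def vcDim {α : Type*} (C : Set (Set α)) : ℕ∞ :=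
  ⨆ (X : Finset α) (_ : Shatters C (X : Set α)), (X.card : ℕ∞)

/-- The `d`-dimensional Gaussian density with mean `μ` and covariance matrix `S`:
`x ↦ (2π)^{-d/2} |det S|^{-1/2} exp(-(x-μ)ᵀ S⁻¹ (x-μ)/2)`. -/
noncomputable def gaussianDensity {d : ℕ} (μ : Fin d → ℝ)
    (S : Matrix (Fin d) (Fin d) ℝ) : (Fin d → ℝ) → ℝ :=
  fun x => (2 * Real.pi) ^ (-(d : ℝ) / 2) * |S.det| ^ (-(1 : ℝ) / 2) *
    Real.exp (-((x - μ) ⬝ᵥ S⁻¹.mulVec (x - μ)) / 2)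

/-- `G_d`: the class of all `d`-dimensional Gaussian densities (the covariance
matrix being any real positive definite `d × d` matrix). -/
def Gaussians (d : ℕ) : Set ((Fin d → ℝ) → ℝ) :=
  {f | ∃ (μ : Fin d → ℝ) (S : Matrix (Fin d) (Fin d) ℝ), S.PosDef ∧ f = gaussianDensity μ S}

/-- `D(P)`: the class of superlevel sets `{x : f x > s}` for `f ∈ P` and `s > 0`. -/
def SuperLevels {α : Type*} (P : Set (α → ℝ)) : Set (Set α) :=
  {S | ∃ f ∈ P, ∃ s : ℝ, 0 < s ∧ S = {x | s < f x}}

/-- `(P)_N`: the class of `N`-component mixtures `p₁f₁ + ⋯ + p_N f_N` of members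
of `P`, with `p_i ≥ 0` summing to `1`. -/
def Mixtures {α : Type*} (N : ℕ) (P : Set (α → ℝ)) : Set (α → ℝ) :=
  {f | ∃ (g : Fin N → α → ℝ) (p : Fin N → ℝ),
    (∀ i, g i ∈ P) ∧ (∀ i, 0 ≤ p i) ∧ (∑ i, p i) = 1 ∧
    f = fun x => ∑ i, p i * g i x}


open Matrix Finset

namespace VCG

noncomputable def s2 : ℝ := (Real.sqrt 2)⁻¹

lemma sqrt2_pos : (0:ℝ) < Real.sqrt 2 := Real.sqrt_pos.2 (by norm_num)

lemma s2_pos : 0 < s2 := inv_pos.2 sqrt2_pos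

lemma s2_mul_s2 : s2 * s2 = 1/2 := by
  rw [s2, ← mul_inv, Real.mul_self_sqrt (by norm_num : (0:ℝ) ≤ 2)]
  norm_num

lemma s2_lt_one : s2 < 1 := by
  have h : (1:ℝ) < Real.sqrt 2 := by
    nlinarith [Real.mul_self_sqrt (by norm_num : (0:ℝ) ≤ 2), sqrt2_pos]
  rw [s2]
  exact inv_lt_one_of_one_lt₀ h

/-- sum over an ite-pair -/
lemma sum_pair_ite {n : ℕ} {k l : Fin n} (h : k ≠ l) (f : Fin n → ℝ) :
    ∑ j, (if j = k ∨ j = l then f j else 0) = f k + f l := by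
  have e : ∀ j : Fin n, (if j = k ∨ j = l then f j else 0)
      = if j ∈ ({k, l} : Finset (Fin n)) then f j else 0 := by
    intro j; simp
  simp_rw [e]
  rw [Finset.sum_ite_mem, Finset.univ_inter, Finset.sum_pair h]

end VCG

namespace VCG

variable {d : ℕ}

/-- index type for the base cluster of points -/
abbrev Idx (d : ℕ) := (Bool × Fin d) ⊕ (Σ k : Fin d, Fin (k : ℕ))

/-- cast the second component of a pair index into `Fin d` -/
def lo {d : ℕ} (k : Fin d) (l : Fin (k : ℕ)) : Fin d := ⟨l, lt_trans l.isLt k.isLt⟩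

/-- the base points: `±e_k` and `(e_k + e_l)/√2` -/
noncomputable def pt0 : Idx d → (Fin d → ℝ)
  | .inl (σ, k) => fun j => if j = k then (if σ then 1 else -1) else 0
  | .inr ⟨k, l⟩ => fun j => if j = k ∨ j = lo k l then s2 else 0

lemma pt0_abs_le (u : Idx d) (j : Fin d) : |pt0 u j| ≤ 1 := by
  match u with
  | .inl (σ, k) =>
    simp only [pt0]
    split_ifs <;> simp
  | .inr ⟨k, l⟩ =>
    simp only [pt0]
    split_ifs
    · rw [abs_of_pos s2_pos]; exact le_of_lt s2_lt_one
    · simp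

/-- squared Euclidean norm as a dot product -/
noncomputable def sq (z : Fin d → ℝ) : ℝ := z ⬝ᵥ z

lemma sq_eq_sum (z : Fin d → ℝ) : sq z = ∑ j, z j * z j := rfl

lemma sq_nonneg' (z : Fin d → ℝ) : 0 ≤ sq z := by
  rw [sq_eq_sum]; exact Finset.sum_nonneg fun j _ => mul_self_nonneg _

lemma sqcoord_le (z : Fin d → ℝ) (k : Fin d) : z k * z k ≤ sq z := by
  rw [sq_eq_sum]
  exact Finset.single_le_sum (fun j _ => mul_self_nonneg (z j)) (Finset.mem_univ k)

lemma sq_pos_of_ne (z : Fin d → ℝ) (hz : z ≠ 0) : 0 < sq z := by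
  obtain ⟨k, hk⟩ := Function.ne_iff.1 hz
  have h1 : 0 < z k * z k := mul_self_pos.2 (by simpa using hk)
  exact lt_of_lt_of_le h1 (sqcoord_le z k)

lemma sq_pt0 (u : Idx d) : sq (pt0 u) = 1 := by
  match u with
  | .inl (σ, k) =>
    simp only [sq, dotProduct, pt0]
    have : ∀ j : Fin d, (if j = k then (if σ then (1:ℝ) else -1) else 0) *
        (if j = k then (if σ then (1:ℝ) else -1) else 0)
        = if j = k then (if σ then (1:ℝ) else -1) * (if σ then (1:ℝ) else -1) else 0 := by
      intro j; split_ifs <;> simp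
    simp_rw [this, Finset.sum_ite_eq' Finset.univ k]
    cases σ <;> norm_num
  | .inr ⟨k, l⟩ =>
    have hkl : k ≠ lo k l := by
      intro h
      have h1 := l.isLt
      have h2 : (k : ℕ) = (l : ℕ) := congrArg Fin.val h
      omega
    simp only [sq, dotProduct, pt0]
    have : ∀ j : Fin d, (if j = k ∨ j = lo k l then s2 else 0) *
        (if j = k ∨ j = lo k l then s2 else 0)
        = if j = k ∨ j = lo k l then s2 * s2 else 0 := by
      intro j; split_ifs <;> simp
    simp_rw [this]
    rw [sum_pair_ite hkl]
    rw [s2_mul_s2]; norm_num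

end VCG

namespace VCG

variable {d : ℕ}

lemma val_lo {k : Fin d} {l : Fin (k:ℕ)} : ((lo k l : Fin d) : ℕ) = (l : ℕ) := rfl

lemma lo_lt {k : Fin d} {l : Fin (k:ℕ)} : lo k l ≠ k := by
  intro h
  have h2 : ((lo k l : Fin d) : ℕ) = (k : ℕ) := congrArg Fin.val h
  rw [val_lo] at h2
  have := l.isLt
  omega

lemma s2_ne_one : s2 ≠ 1 := ne_of_lt s2_lt_one
lemma s2_ne_zero : s2 ≠ 0 := ne_of_gt s2_pos

/-- helper: from `s2 = ite c s2 0` conclude `c` -/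
lemma cond_of_s2 {c : Prop} [Decidable c] (h : s2 = if c then s2 else 0) : c := by
  by_contra hc
  rw [if_neg hc] at h
  exact s2_ne_zero h

lemma cond_of_s2' {c1 c2 : Prop} [Decidable c1] [Decidable c2] (hc1 : c1)
    (h : (if c1 then s2 else 0) = (if c2 then s2 else 0)) : c2 := by
  rw [if_pos hc1] at h
  exact cond_of_s2 h

lemma pt0_injective : Function.Injective (pt0 (d := d)) := by
  intro u u' h
  match u, u' with
  | .inl (σ, k), .inl (σ', k') =>
    have hk := congrFun h k
    simp only [pt0, if_pos rfl] at hk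
    have hkk' : k = k' := by
      by_contra hne
      rw [if_neg hne] at hk
      cases σ <;> norm_num at hk
    subst hkk'
    rw [if_pos rfl] at hk
    cases σ <;> cases σ' <;> norm_num at hk <;> rfl
  | .inl (σ, k), .inr ⟨k', l'⟩ =>
    exfalso
    have hk := congrFun h k
    simp only [pt0, if_pos rfl] at hk
    have hs := s2_lt_one
    have hsp := s2_pos
    split_ifs at hk <;> cases σ <;> norm_num at hk <;> linarith
  | .inr ⟨k', l'⟩, .inl (σ, k) =>
    exfalso
    have hk := congrFun h k
    simp only [pt0, if_pos rfl] at hk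
    have hs := s2_lt_one
    have hsp := s2_pos
    split_ifs at hk <;> cases σ <;> norm_num at hk <;> linarith
  | .inr ⟨k, l⟩, .inr ⟨k', l'⟩ =>
    have h1 : k = k' ∨ k = lo k' l' := by
      have := congrFun h k
      simp only [pt0, if_pos (Or.inl rfl)] at this
      exact cond_of_s2 this
    have h2 : lo k l = k' ∨ lo k l = lo k' l' := by
      have hh := congrFun h (lo k l)
      simp only [pt0] at hh
      rw [if_pos (Or.inr trivial)] at hh
      exact cond_of_s2 hh
    have h3 : k' = k ∨ k' = lo k l := by
      have := congrFun h.symm k'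
      simp only [pt0, if_pos (Or.inl rfl)] at this
      exact cond_of_s2 this
    have hl := l.isLt
    have hl' := l'.isLt
    have hkk' : k = k' := by
      rcases h1 with h1 | h1
      · exact h1
      · exfalso
        have e1 : (k : ℕ) = (l' : ℕ) := congrArg Fin.val h1
        rcases h3 with h3 | h3
        · have := congrArg Fin.val h3; omega
        · have : (k' : ℕ) = (l : ℕ) := congrArg Fin.val h3; omega
    subst hkk'
    have hll' : l = l' := by
      rcases h2 with h2 | h2
      · exfalso
        have h4 := congrArg Fin.val h2
        rw [val_lo] at h4
        omega
      · have := congrArg Fin.val h2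
        simp only [val_lo] at this
        exact Fin.ext this
    subst hll'
    rfl

lemma card_idx (hd : 0 < d) : Fintype.card (Idx d) = (d ^ 2 + 3 * d) / 2 := by
  obtain ⟨n, rfl⟩ : ∃ n, d = n + 1 := ⟨d - 1, by omega⟩
  have h1 : Fintype.card (Idx (n+1))
      = 2 * (n+1) + ∑ k : Fin (n+1), (k : ℕ) := by
    simp only [Idx, Fintype.card_sum, Fintype.card_sigma, Fintype.card_prod,
      Fintype.card_bool, Fintype.card_fin]
  rw [h1, Fin.sum_univ_eq_sum_range (fun i => i) (n+1)]
  have h2 : (∑ i ∈ Finset.range (n+1), i) * 2 = (n+1) * n := by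
    simpa using Finset.sum_range_id_mul_two (n+1)
  have h3 : (n+1)^2 = (n+1) * n + (n+1) := by ring
  rw [h3, ← h2]
  omega

end VCG

namespace VCG

variable {d : ℕ}

/-- signed basis points -/
noncomputable def ep (k : Fin d) (σ : Bool) : Fin d → ℝ := pt0 (.inl (σ, k))

/-- pair points -/
noncomputable def pp (k l : Fin d) : Fin d → ℝ := fun j => if j = k ∨ j = l then s2 else 0

lemma pt0_inr (k : Fin d) (l : Fin (k : ℕ)) : pt0 (.inr ⟨k, l⟩) = pp k (lo k l) := rfl

lemma pp_comm (k l : Fin d) : pp k l = pp l k := by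
  funext j; simp only [pp, or_comm]

lemma dot_ep (v : Fin d → ℝ) (k : Fin d) (σ : Bool) :
    v ⬝ᵥ ep k σ = (if σ then 1 else -1) * v k := by
  cases σ <;>
    simp [dotProduct, ep, pt0, mul_ite, mul_zero, mul_neg, mul_one,
      Finset.sum_ite_eq' Finset.univ k]

lemma dot_pp (v : Fin d → ℝ) {k l : Fin d} (h : k ≠ l) :
    v ⬝ᵥ pp k l = s2 * (v k + v l) := by
  simp only [dotProduct, pp, mul_ite, mul_zero]
  have e : ∀ j : Fin d, (if j = k ∨ j = l then v j * s2 else 0)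
      = (if j = k ∨ j = l then (fun i => v i * s2) j else 0) := fun j => rfl
  rw [Finset.sum_congr rfl (fun j _ => e j), sum_pair_ite h]
  ring

end VCG

namespace VCG

variable {d : ℕ}

section coeffs

variable (t : (Fin d → ℝ) → ℝ)

/-- linear coefficients -/
noncomputable def aco (k : Fin d) : ℝ := (t (ep k true) - t (ep k false)) / 2

/-- diagonal quadratic coefficients -/
noncomputable def Eco (k : Fin d) : ℝ := (t (ep k true) + t (ep k false)) / 2

/-- off-diagonal quadratic coefficients -/
noncomputable def bco (k l : Fin d) : ℝ :=
  2 * (t (pp k l) - (aco t k + aco t l) * s2 - (Eco t k + Eco t l) / 2)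

/-- the quadratic-part coefficient matrix -/
noncomputable def Bmat : Matrix (Fin d) (Fin d) ℝ :=
  fun k l => if k = l then 2 * Eco t k else if k < l then bco t k l else bco t l k

lemma Bmat_symm (k l : Fin d) : Bmat t l k = Bmat t k l := by
  unfold Bmat
  rcases lt_trichotomy k l with h | h | h
  · rw [if_neg (ne_of_gt h), if_neg (not_lt_of_gt h), if_neg (ne_of_lt h), if_pos h]
  · subst h; rfl
  · rw [if_neg (ne_of_lt h), if_pos h, if_neg (ne_of_gt h), if_neg (not_lt_of_gt h)]

lemma Bmat_diag (k : Fin d) : Bmat t k k = 2 * Eco t k := by simp [Bmat]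

lemma Bmat_off {k l : Fin d} (h : k < l) : Bmat t k l = bco t k l := by
  rw [Bmat, if_neg (ne_of_lt h), if_pos h]

/-- the interpolating quadratic (constant term zero) -/
noncomputable def Qf (z : Fin d → ℝ) : ℝ := aco t ⬝ᵥ z + (z ⬝ᵥ Bmat t *ᵥ z) / 2

lemma mulVec_ep (B : Matrix (Fin d) (Fin d) ℝ) (k : Fin d) (σ : Bool) (j : Fin d) :
    (B *ᵥ ep k σ) j = (if σ then 1 else -1) * B j k := by
  show (fun l => B j l) ⬝ᵥ ep k σ = _
  rw [dot_ep]

lemma mulVec_pp (B : Matrix (Fin d) (Fin d) ℝ) {k l : Fin d} (h : k ≠ l) (j : Fin d) :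
    (B *ᵥ pp k l) j = s2 * (B j k + B j l) := by
  show (fun i => B j i) ⬝ᵥ pp k l = _
  rw [dot_pp _ h]

lemma quad_ep (B : Matrix (Fin d) (Fin d) ℝ) (k : Fin d) (σ : Bool) :
    ep k σ ⬝ᵥ B *ᵥ ep k σ = B k k := by
  rw [dotProduct_comm, dot_ep, mulVec_ep]
  cases σ <;> norm_num

lemma quad_pp (B : Matrix (Fin d) (Fin d) ℝ) {k l : Fin d} (h : k ≠ l) :
    pp k l ⬝ᵥ B *ᵥ pp k l = (B k k + B k l + (B l k + B l l)) / 2 := by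
  rw [dotProduct_comm, dot_pp _ h, mulVec_pp _ h, mulVec_pp _ h]
  have e : s2 * (s2 * (B k k + B k l) + s2 * (B l k + B l l))
      = (s2 * s2) * (B k k + B k l + (B l k + B l l)) := by ring
  rw [e, s2_mul_s2]
  ring

lemma Qf_ep (k : Fin d) (σ : Bool) : Qf t (ep k σ) = t (ep k σ) := by
  rw [Qf, dot_ep, quad_ep, Bmat_diag]
  cases σ <;> simp [aco, Eco] <;> ring

lemma Qf_pp {k l : Fin d} (h : k < l) : Qf t (pp k l) = t (pp k l) := by
  rw [Qf, dot_pp _ (ne_of_lt h), quad_pp _ (ne_of_lt h), Bmat_diag, Bmat_diag,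
    Bmat_off _ h, Bmat_symm]
  rw [Bmat_off _ h, bco]
  ring

lemma Qf_pt0 (u : Idx d) : Qf t (pt0 u) = t (pt0 u) := by
  match u with
  | .inl (σ, k) => exact Qf_ep t k σ
  | .inr ⟨k, l⟩ =>
    have hlt : lo k l < k := by
      have := l.isLt
      exact Fin.mk_lt_of_lt_val (by simpa [val_lo] using this)
    rw [pt0_inr, pp_comm]
    exact Qf_pp t hlt

end coeffs

end VCG

namespace VCG

variable {d : ℕ}

lemma abs_coord_le_one_add_sq (z : Fin d → ℝ) (k : Fin d) : |z k| ≤ 1 + sq z := by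
  have h1 := sqcoord_le z k
  have h2 : |z k| * |z k| = z k * z k := by rw [abs_mul_abs_self]
  nlinarith [sq_nonneg (|z k| - 1), abs_nonneg (z k)]

lemma abs_prod_le_sq (z : Fin d → ℝ) (k l : Fin d) : |z k * z l| ≤ sq z := by
  have h1 := sqcoord_le z k
  have h2 := sqcoord_le z l
  rw [abs_mul]
  have h3 : |z k| * |z k| = z k * z k := abs_mul_abs_self _
  have h4 : |z l| * |z l| = z l * z l := abs_mul_abs_self _
  nlinarith [sq_nonneg (|z k| - |z l|), abs_nonneg (z k), abs_nonneg (z l)]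

/-- bound on the linear form -/
lemma abs_dot_le (a z : Fin d → ℝ) :
    |a ⬝ᵥ z| ≤ (∑ k, |a k|) * (1 + sq z) := by
  calc |a ⬝ᵥ z| ≤ ∑ k, |a k * z k| := Finset.abs_sum_le_sum_abs _ _
    _ ≤ ∑ k, |a k| * (1 + sq z) := by
        apply Finset.sum_le_sum
        intro k _
        rw [abs_mul]
        exact mul_le_mul_of_nonneg_left (abs_coord_le_one_add_sq z k) (abs_nonneg _)
    _ = (∑ k, |a k|) * (1 + sq z) := by rw [Finset.sum_mul]

/-- bound on the quadratic form -/
lemma abs_quad_le (B : Matrix (Fin d) (Fin d) ℝ) (z : Fin d → ℝ) :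
    |z ⬝ᵥ B *ᵥ z| ≤ (∑ k, ∑ l, |B k l|) * sq z := by
  have e : z ⬝ᵥ B *ᵥ z = ∑ k, ∑ l, z k * (B k l * z l) := by
    simp only [dotProduct, Matrix.mulVec, Finset.mul_sum]
  rw [e]
  calc |∑ k, ∑ l, z k * (B k l * z l)| ≤ ∑ k, |∑ l, z k * (B k l * z l)| :=
        Finset.abs_sum_le_sum_abs _ _
    _ ≤ ∑ k, ∑ l, |z k * (B k l * z l)| :=
        Finset.sum_le_sum fun k _ => Finset.abs_sum_le_sum_abs _ _
    _ ≤ ∑ k, ∑ l, |B k l| * sq z := by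
        apply Finset.sum_le_sum; intro k _
        apply Finset.sum_le_sum; intro l _
        have e2 : z k * (B k l * z l) = B k l * (z k * z l) := by ring
        rw [e2, abs_mul]
        exact mul_le_mul_of_nonneg_left (abs_prod_le_sq z k l) (abs_nonneg _)
    _ = (∑ k, ∑ l, |B k l|) * sq z := by
        rw [Finset.sum_mul]
        exact Finset.sum_congr rfl fun k _ => by rw [Finset.sum_mul]

end VCG


namespace VCG

variable {d : ℕ}

lemma dot_mulVec_comm (A : Matrix (Fin d) (Fin d) ℝ) (hs : ∀ i j, A i j = A j i)
    (u v : Fin d → ℝ) : u ⬝ᵥ A *ᵥ v = v ⬝ᵥ A *ᵥ u := by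
  simp only [dotProduct, Matrix.mulVec, Finset.mul_sum]
  rw [Finset.sum_comm]
  apply Finset.sum_congr rfl; intro j _
  apply Finset.sum_congr rfl; intro i _
  rw [hs i j]; ring

/-- The key single-Gaussian construction. -/
lemma exists_gaussian (T : Set (Fin d → ℝ)) (L : ℝ) (hL : 0 ≤ L) :
    ∃ (μ : Fin d → ℝ) (S : Matrix (Fin d) (Fin d) ℝ) (κ : ℝ), S.PosDef ∧ 0 < κ ∧
      (∀ u : Idx d,
        (pt0 u ∈ T → gaussianDensity μ S (pt0 u) = κ * Real.exp 1) ∧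
        (pt0 u ∉ T → gaussianDensity μ S (pt0 u) = κ * Real.exp (-L))) ∧
      (∀ z : Fin d → ℝ, 4 ≤ sq z → gaussianDensity μ S z ≤ κ * Real.exp (-L)) := by
  classical
  set t : (Fin d → ℝ) → ℝ := fun u => if u ∈ T then 1 else -L with ht
  set a : Fin d → ℝ := aco t with ha
  set B : Matrix (Fin d) (Fin d) ℝ := Bmat t with hB
  set Sa : ℝ := ∑ k, |a k| with hSa
  set Sb : ℝ := ∑ k, ∑ l, |B k l| with hSb
  have hSa0 : 0 ≤ Sa := Finset.sum_nonneg fun _ _ => abs_nonneg _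
  have hSb0 : 0 ≤ Sb :=
    Finset.sum_nonneg fun _ _ => Finset.sum_nonneg fun _ _ => abs_nonneg _
  set Cb : ℝ := Sa + Sb with hCb
  have hCb0 : 0 ≤ Cb := by positivity
  set lam : ℝ := 5 * Cb + L + 1 with hlam
  set A : Matrix (Fin d) (Fin d) ℝ := lam • (1 : Matrix (Fin d) (Fin d) ℝ) - B with hA
  have hAsym : ∀ i j, A i j = A j i := by
    intro i j
    simp only [hA, Matrix.sub_apply, Matrix.smul_apply, Matrix.one_apply]
    by_cases h : i = j
    · subst h; rfl
    · rw [if_neg h, if_neg (Ne.symm h), hB, Bmat_symm]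
  have hquadA : ∀ z : Fin d → ℝ, z ⬝ᵥ A *ᵥ z = lam * sq z - z ⬝ᵥ B *ᵥ z := by
    intro z
    rw [hA, Matrix.sub_mulVec, dotProduct_sub, Matrix.smul_mulVec,
      Matrix.one_mulVec, dotProduct_smul, smul_eq_mul]
    rfl
  have hApos : A.PosDef := by
    refine Matrix.PosDef.of_dotProduct_mulVec_pos ?_ ?_
    · show A.conjTranspose = A
      ext i j
      rw [Matrix.conjTranspose_apply, star_trivial]
      exact hAsym j i
    · intro z hz
      have h1 : star z = z := star_trivial z
      rw [h1, hquadA]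
      have h2 : |z ⬝ᵥ B *ᵥ z| ≤ Sb * sq z := abs_quad_le B z
      have h3 : 0 < sq z := sq_pos_of_ne z hz
      have h4 : z ⬝ᵥ B *ᵥ z ≤ Sb * sq z := le_trans (le_abs_self _) h2
      have h5 : 0 < (lam - Sb) * sq z := by
        apply mul_pos _ h3
        rw [hlam, hCb]
        nlinarith
      nlinarith
  have hdet : IsUnit A.det := hApos.det_pos.ne'.isUnit
  set S : Matrix (Fin d) (Fin d) ℝ := A⁻¹ with hS
  have hSpos : S.PosDef := hApos.inv
  have hSinv : S⁻¹ = A := Matrix.nonsing_inv_nonsing_inv A hdet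
  set μ : Fin d → ℝ := A⁻¹ *ᵥ a with hμ
  have hAμ : A *ᵥ μ = a := by
    rw [hμ, Matrix.mulVec_mulVec, Matrix.mul_nonsing_inv A hdet, Matrix.one_mulVec]
  set c0 : ℝ := lam / 2 + (a ⬝ᵥ μ) / 2 with hc0
  set Qt : (Fin d → ℝ) → ℝ := fun z => Qf t z - lam * (sq z - 1) / 2 with hQt
  have hexp : ∀ z : Fin d → ℝ, -((z - μ) ⬝ᵥ A *ᵥ (z - μ)) / 2 = Qt z - c0 := by
    intro z
    have e1 : (z - μ) ⬝ᵥ A *ᵥ (z - μ)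
        = z ⬝ᵥ A *ᵥ z - z ⬝ᵥ A *ᵥ μ - (μ ⬝ᵥ A *ᵥ z - μ ⬝ᵥ A *ᵥ μ) := by
      rw [Matrix.mulVec_sub]
      rw [dotProduct_sub, sub_dotProduct, sub_dotProduct]
      ring
    have e2 : μ ⬝ᵥ A *ᵥ z = z ⬝ᵥ A *ᵥ μ := dot_mulVec_comm A hAsym μ z
    have e3 : z ⬝ᵥ A *ᵥ μ = a ⬝ᵥ z := by rw [hAμ, dotProduct_comm]
    have e4 : μ ⬝ᵥ A *ᵥ μ = a ⬝ᵥ μ := by rw [hAμ, dotProduct_comm]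
    rw [e1, e2, e3, e4, hquadA z]
    show _ = Qf t z - lam * (sq z - 1) / 2 - c0
    rw [hc0]
    simp only [Qf]
    ring
  set Kc : ℝ := (2 * Real.pi) ^ (-(d : ℝ) / 2) * |S.det| ^ (-(1 : ℝ) / 2) with hKc
  have hKc0 : 0 < Kc := by
    apply mul_pos
    · exact Real.rpow_pos_of_pos (by positivity) _
    · exact Real.rpow_pos_of_pos (abs_pos.2 hSpos.det_pos.ne') _
  set κ : ℝ := Kc * Real.exp (-c0) with hκ
  have hκ0 : 0 < κ := mul_pos hKc0 (Real.exp_pos _)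
  have hval : ∀ z : Fin d → ℝ, gaussianDensity μ S z = κ * Real.exp (Qt z) := by
    intro z
    show Kc * Real.exp (-((z - μ) ⬝ᵥ S⁻¹ *ᵥ (z - μ)) / 2) = κ * Real.exp (Qt z)
    rw [hSinv, hexp z, Real.exp_sub, hκ, Real.exp_neg]
    ring
  have hQtpt : ∀ u : Idx d, Qt (pt0 u) = t (pt0 u) := by
    intro u
    show Qf t (pt0 u) - lam * (sq (pt0 u) - 1) / 2 = t (pt0 u)
    rw [Qf_pt0, sq_pt0]
    ring
  refine ⟨μ, S, κ, hSpos, hκ0, fun u => ⟨fun hu => ?_, fun hu => ?_⟩, fun z hz => ?_⟩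
  · rw [hval, hQtpt u, ht]
    simp only [if_pos hu]
  · rw [hval, hQtpt u, ht]
    simp only [if_neg hu]
  · rw [hval z]
    have h1 : Qt (z : Fin d → ℝ) ≤ -L := by
      have h3 := abs_dot_le a z
      have h4 := abs_quad_le B z
      have h6 : 0 ≤ sq z := sq_nonneg' z
      have h5 : Qf t z ≤ Sa * (1 + sq z) + (Sb * sq z) / 2 := by
        have i1 := le_trans (le_abs_self (a ⬝ᵥ z)) h3
        have i2 := le_trans (le_abs_self (z ⬝ᵥ B *ᵥ z)) h4
        show a ⬝ᵥ z + (z ⬝ᵥ B *ᵥ z) / 2 ≤ _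
        linarith
      have h2 : Qf t z ≤ Cb * (1 + sq z) := by rw [hCb]; nlinarith
      show Qf t z - lam * (sq z - 1) / 2 ≤ -L
      rw [hlam] at *
      nlinarith
    exact mul_le_mul_of_nonneg_left (Real.exp_le_exp.2 h1) (le_of_lt hκ0)

end VCG

namespace VCG

variable {N d : ℕ}

/-- translation offset of the `i`-th cluster -/
noncomputable def off (d : ℕ) (i : Fin N) : Fin d → ℝ :=
  fun j => if (j : ℕ) = 0 then 3 * (i : ℝ) else 0

/-- the full family of points -/
noncomputable def ptN (q : Fin N × Idx d) : Fin d → ℝ := pt0 q.2 + off d q.1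

lemma gaussian_translate (μ v : Fin d → ℝ) (S : Matrix (Fin d) (Fin d) ℝ)
    (x : Fin d → ℝ) : gaussianDensity (μ + v) S x = gaussianDensity μ S (x - v) := by
  unfold gaussianDensity
  rw [show x - (μ + v) = x - v - μ by rw [sub_sub, add_comm]]

lemma gaussianDensity_nonneg (μ : Fin d → ℝ) (S : Matrix (Fin d) (Fin d) ℝ)
    (x : Fin d → ℝ) : 0 ≤ gaussianDensity μ S x := by
  unfold gaussianDensity
  positivity

lemma fin_cast_dist {i i' : Fin N} (h : i ≠ i') : 3 ≤ |3 * (i : ℝ) - 3 * (i' : ℝ)| := by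
  have h1 : (1 : ℝ) ≤ |(i : ℝ) - (i' : ℝ)| := by
    have hne : ((i : ℕ) : ℤ) - ((i' : ℕ) : ℤ) ≠ 0 := by
      intro hc
      exact h (Fin.ext (by omega))
    have h2 : 1 ≤ |((i : ℕ) : ℤ) - ((i' : ℕ) : ℤ)| := Int.one_le_abs hne
    have h3 : ((|((i : ℕ) : ℤ) - ((i' : ℕ) : ℤ)| : ℤ) : ℝ) = |(i : ℝ) - (i' : ℝ)| := by
      push_cast
      rfl
    rw [← h3]
    exact_mod_cast h2
  rw [show 3 * (i:ℝ) - 3 * (i':ℝ) = 3 * ((i:ℝ) - (i':ℝ)) by ring, abs_mul]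
  rw [show |(3:ℝ)| = 3 by norm_num]
  linarith

lemma dot_off (hd : 0 < d) (v : Fin d → ℝ) (c : ℝ) :
    v ⬝ᵥ (fun j : Fin d => if (j : ℕ) = 0 then c else 0) = v ⟨0, hd⟩ * c := by
  have e : ∀ j : Fin d, ((j : ℕ) = 0) = (j = ⟨0, hd⟩) := by
    intro j; simp [Fin.ext_iff]
  simp only [dotProduct, mul_ite, mul_zero]
  simp_rw [e]
  rw [Finset.sum_ite_eq' Finset.univ (⟨0, hd⟩ : Fin d)]
  simp

lemma ptN_injective (hd : 0 < d) : Function.Injective (ptN (N := N) (d := d)) := by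
  intro q q' h
  set k0 : Fin d := ⟨0, hd⟩ with hk0
  have h0 := congrFun h k0
  have hoff : ∀ i : Fin N, off d i k0 = 3 * (i : ℝ) := fun i => by
    simp [off, hk0]
  have h1 : pt0 q.2 k0 + 3 * (q.1 : ℝ) = pt0 q'.2 k0 + 3 * (q'.1 : ℝ) := by
    simpa [ptN, Pi.add_apply, hoff] using h0
  have hq1 : q.1 = q'.1 := by
    by_contra hne
    have h2 := fin_cast_dist hne
    have h3 := pt0_abs_le q.2 k0
    have h4 := pt0_abs_le q'.2 k0
    have h5 : |3 * (q.1 : ℝ) - 3 * (q'.1 : ℝ)| ≤ 2 := by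
      rw [show 3 * (q.1 : ℝ) - 3 * (q'.1 : ℝ) = pt0 q'.2 k0 - pt0 q.2 k0 by linarith]
      have := abs_le.1 h3
      have := abs_le.1 h4
      rw [abs_le]
      constructor <;> linarith
    linarith
  have hq2 : q.2 = q'.2 := by
    apply pt0_injective
    have : pt0 q.2 + off d q.1 = pt0 q'.2 + off d q'.1 := h
    rw [hq1] at this
    exact add_right_cancel this
  exact Prod.ext hq1 hq2

lemma far_sq (hd : 0 < d) (u : Idx d) {i i' : Fin N} (h : i ≠ i') :
    4 ≤ sq (pt0 u + (off d i - off d i')) := by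
  set τ : ℝ := 3 * (i : ℝ) - 3 * (i' : ℝ) with hτ
  have hw : off d i - off d i' = (fun j : Fin d => if (j : ℕ) = 0 then τ else 0) := by
    funext j
    simp only [Pi.sub_apply, off]
    split_ifs <;> simp [hτ] <;> ring
  set w : Fin d → ℝ := fun j : Fin d => if (j : ℕ) = 0 then τ else 0 with hwdef
  rw [hw]
  have e1 : sq (pt0 u + w) = sq (pt0 u) + 2 * (pt0 u ⬝ᵥ w) + sq w := by
    show (pt0 u + w) ⬝ᵥ (pt0 u + w) = pt0 u ⬝ᵥ pt0 u + 2 * (pt0 u ⬝ᵥ w) + w ⬝ᵥ w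
    rw [add_dotProduct, dotProduct_add, dotProduct_add,
      dotProduct_comm w (pt0 u)]
    ring
  have e2 : pt0 u ⬝ᵥ w = pt0 u ⟨0, hd⟩ * τ := dot_off hd _ τ
  have e3 : sq w = τ * τ := by
    show w ⬝ᵥ w = τ * τ
    rw [hwdef, dot_off hd]
    simp
  rw [e1, e2, e3, sq_pt0]
  have h2 : 3 ≤ |τ| := fin_cast_dist h
  have h3 := abs_le.1 (pt0_abs_le u ⟨0, hd⟩)
  rcases abs_le.1 (le_refl |τ|) with _
  rcases le_or_gt 0 τ with hτ0 | hτ0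
  · rw [abs_of_nonneg hτ0] at h2
    nlinarith
  · rw [abs_of_neg hτ0] at h2
    nlinarith

end VCG

open VCG in
/-- The VC dimension of the class `D((G_d)_N)` induced by `N`-component
`d`-dimensional Gaussian mixture densities is at least `N(d² + 3d)/2`. -/
theorem vcDim_gaussian_mixtures_ge (N d : ℕ) (hN : 0 < N) (hd : 0 < d) :
    ((N * ((d ^ 2 + 3 * d) / 2) : ℕ) : ℕ∞) ≤ vcDim (SuperLevels (Mixtures N (Gaussians d))) := by
  classical
  set C : Set (Set (Fin d → ℝ)) := SuperLevels (Mixtures N (Gaussians d)) with hC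
  set L : ℝ := 1 + Real.log N with hL
  have hL0 : 0 ≤ L := by
    have : 0 ≤ Real.log N := Real.log_nonneg (by exact_mod_cast hN)
    linarith
  choose μf Sf κf hSpos hκpos hvals hfar using
    fun T : Set (Fin d → ℝ) => exists_gaussian T L hL0
  set X : Finset (Fin d → ℝ) := Finset.image (ptN (N := N) (d := d)) Finset.univ with hX
  have hXcard : X.card = N * ((d ^ 2 + 3 * d) / 2) := by
    rw [hX, Finset.card_image_of_injective _ (ptN_injective hd), Finset.card_univ,
      Fintype.card_prod, Fintype.card_fin, card_idx hd]
  have hshat : Shatters C (X : Set (Fin d → ℝ)) := by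
    intro Y hY
    set Ti : Fin N → Set (Fin d → ℝ) := fun i => {u | u + off d i ∈ Y} with hTi
    set g : Fin N → (Fin d → ℝ) → ℝ :=
      fun i => gaussianDensity (μf (Ti i) + off d i) (Sf (Ti i)) with hg
    set κi : Fin N → ℝ := fun i => κf (Ti i) with hκi
    set W : ℝ := ∑ i, (κi i)⁻¹ with hW
    have hW0 : 0 < W :=
      Finset.sum_pos (fun i _ => inv_pos.2 (hκpos _)) ⟨⟨0, hN⟩, Finset.mem_univ _⟩
    set p : Fin N → ℝ := fun i => (κi i)⁻¹ / W with hp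
    have hp0 : ∀ i, 0 ≤ p i := fun i => by
      apply div_nonneg (le_of_lt (inv_pos.2 (hκpos _))) (le_of_lt hW0)
    set f : (Fin d → ℝ) → ℝ := fun x => ∑ i, p i * g i x with hf
    have hfmem : f ∈ Mixtures N (Gaussians d) := by
      refine ⟨g, p, fun i => ⟨μf (Ti i) + off d i, Sf (Ti i), hSpos _, rfl⟩, hp0, ?_, rfl⟩
      rw [hp]
      simp only
      rw [← Finset.sum_div, ← hW, div_self (ne_of_gt hW0)]
    -- value computations
    have hgval : ∀ (i : Fin N) (u : Idx d),
        (ptN (i, u) ∈ Y → g i (ptN (i, u)) = κi i * Real.exp 1) ∧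
        (ptN (i, u) ∉ Y → g i (ptN (i, u)) = κi i * Real.exp (-L)) := by
      intro i u
      have e1 : g i (ptN (i, u)) = gaussianDensity (μf (Ti i)) (Sf (Ti i)) (pt0 u) := by
        rw [hg]
        simp only
        rw [gaussian_translate]
        congr 1
        show pt0 u + off d i - off d i = pt0 u
        rw [add_sub_cancel_right]
      have hmem : pt0 u ∈ Ti i ↔ ptN (i, u) ∈ Y := Iff.rfl
      constructor
      · intro hxy
        rw [e1, (hvals (Ti i) u).1 (hmem.2 hxy)]
      · intro hxy
        rw [e1, (hvals (Ti i) u).2 (fun hc => hxy (hmem.1 hc))]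
    have hgfar : ∀ (i j : Fin N) (u : Idx d), j ≠ i →
        g j (ptN (i, u)) ≤ κi j * Real.exp (-L) := by
      intro i j u hji
      have e1 : g j (ptN (i, u))
          = gaussianDensity (μf (Ti j)) (Sf (Ti j)) (pt0 u + (off d i - off d j)) := by
        rw [hg]
        simp only
        rw [gaussian_translate]
        congr 1
        show pt0 u + off d i - off d j = pt0 u + (off d i - off d j)
        rw [add_sub_assoc]
      rw [e1]
      exact hfar (Ti j) _ (far_sq hd u (Ne.symm hji))
    -- the superlevel set
    refine ⟨{x | W⁻¹ < f x}, ⟨f, hfmem, W⁻¹, inv_pos.2 hW0, rfl⟩, ?_⟩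
    have hterm : ∀ (j : Fin N) (c : ℝ), p j * (κi j * c) = c / W := by
      intro j c
      show (κi j)⁻¹ / W * (κi j * c) = c / W
      rw [div_mul_eq_mul_div, ← mul_assoc,
        inv_mul_cancel₀ (ne_of_gt (show (0:ℝ) < κi j from hκpos _)), one_mul]
    have hfeq : ∀ z : Fin d → ℝ, f z = ∑ j, p j * g j z := fun z => rfl
    ext x
    constructor
    · intro hxY
      have hxX : x ∈ (X : Set (Fin d → ℝ)) := hY hxY
      obtain ⟨q, -, hq⟩ := Finset.mem_image.1 (Finset.mem_coe.1 hxX)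
      obtain ⟨i, u⟩ := q
      refine ⟨hxX, ?_⟩
      show W⁻¹ < f x
      have hval := (hgval i u).1 (by rw [hq]; exact hxY)
      have hlow : Real.exp 1 / W ≤ ∑ j, p j * g j (ptN (i, u)) := by
        rw [← hterm i (Real.exp 1), ← hval]
        exact Finset.single_le_sum (f := fun j => p j * g j (ptN (i, u)))
          (fun j _ => mul_nonneg (hp0 j) (gaussianDensity_nonneg _ _ _))
          (Finset.mem_univ i)
      have h1 : W⁻¹ < Real.exp 1 / W := by
        rw [div_eq_mul_inv]
        have he : (1 : ℝ) < Real.exp 1 := by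
          have := Real.add_one_le_exp 1
          linarith
        nlinarith [inv_pos.2 hW0]
      rw [← hq, hfeq]
      exact lt_of_lt_of_le h1 hlow
    · rintro ⟨hxX, hfx⟩
      have hfx' : W⁻¹ < f x := hfx
      by_contra hxY
      obtain ⟨q, -, hq⟩ := Finset.mem_image.1 (Finset.mem_coe.1 hxX)
      obtain ⟨i, u⟩ := q
      have hub : ∀ j : Fin N, p j * g j (ptN (i, u)) ≤ Real.exp (-L) / W := by
        intro j
        have hgj : g j (ptN (i, u)) ≤ κi j * Real.exp (-L) := by
          rcases eq_or_ne j i with rfl | hji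
          · exact le_of_eq ((hgval j u).2 (by rw [hq]; exact hxY))
          · exact hgfar i j u hji
        calc p j * g j (ptN (i, u)) ≤ p j * (κi j * Real.exp (-L)) :=
              mul_le_mul_of_nonneg_left hgj (hp0 j)
          _ = Real.exp (-L) / W := hterm j _
      have hsum : f (ptN (i, u)) ≤ N * (Real.exp (-L) / W) := by
        rw [hfeq]
        calc ∑ j, p j * g j (ptN (i, u)) ≤ ∑ _j : Fin N, Real.exp (-L) / W :=
              Finset.sum_le_sum fun j _ => hub j
          _ = N * (Real.exp (-L) / W) := by
              rw [Finset.sum_const, Finset.card_univ, Fintype.card_fin, nsmul_eq_mul]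
      have hNe : (N : ℝ) * Real.exp (-L) = Real.exp (-1) := by
        rw [hL, neg_add, Real.exp_add, Real.exp_neg (Real.log N), Real.exp_log
          (by exact_mod_cast hN : (0:ℝ) < N)]
        field_simp
      have hlt : f (ptN (i, u)) ≤ Real.exp (-1) * W⁻¹ := by
        rw [← hNe]
        calc f (ptN (i, u)) ≤ N * (Real.exp (-L) / W) := hsum
          _ = N * Real.exp (-L) * W⁻¹ := by ring
      have he1 : Real.exp (-1) < 1 := by
        rw [Real.exp_neg]
        have := Real.add_one_le_exp 1
        have h2 : (1:ℝ) < Real.exp 1 := by linarith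
        rw [inv_lt_one_iff₀]
        right; exact h2
      have hcon : f (ptN (i, u)) < W⁻¹ := by
        apply lt_of_le_of_lt hlt
        nlinarith [inv_pos.2 hW0]
      rw [hq] at hcon
      exact absurd hfx' (not_lt.2 (le_of_lt hcon))
  have hle : ((X.card : ℕ∞)) ≤ vcDim C :=
    le_iSup₂ (f := fun (Z : Finset (Fin d → ℝ)) (_ : Shatters C (Z : Set (Fin d → ℝ))) =>
      (Z.card : ℕ∞)) X hshat
  rw [← hXcard]
  exact hle
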